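/- arXiv:2212.04946 — 4 statements merged into one kernel-verified Lean document; each statement's English description precedes it below -/
import Mathlib

section
/- If f ∈ C*(g₁⊕g₂, g₁⊕g₂) has bidegree (−1)|k and g has bidegree (−1)|l, then [f,g]_NR = 0. Consequently ⊕_{l≥1} C^{−1|l}(g₁⊕g₂, g₁⊕g₂) is an abelian graded Lie subalgebra of (C*(g₁⊕g₂, g₁⊕g₂), [·,·]_NR). -/
open BigOperators

namespace RBPaper

/-- A permutation of `Fin n` is an `(i, n-i)`-shuffle if it is strictly increasing on the
first `i` indices and on the last `n - i` indices. -/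
def IsShuffle {n : ℕ} (i : ℕ) (σ : Equiv.Perm (Fin n)) : Prop :=
  (∀ a b : Fin n, a < b → (b : ℕ) < i → σ a < σ b) ∧
  (∀ a b : Fin n, a < b → i ≤ (a : ℕ) → σ a < σ b)

/-- `(a, b, n-a-b)`-shuffles. -/
def IsShuffle3 {n : ℕ} (a b : ℕ) (σ : Equiv.Perm (Fin n)) : Prop :=
  (∀ p q : Fin n, p < q → (q : ℕ) < a → σ p < σ q) ∧
  (∀ p q : Fin n, p < q → a ≤ (p : ℕ) → (q : ℕ) < a + b → σ p < σ q) ∧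
  (∀ p q : Fin n, p < q → a + b ≤ (p : ℕ) → σ p < σ q)

/-- The finite set of `(i, n-i)`-shuffles. -/
noncomputable def shuffles (i n : ℕ) : Finset (Equiv.Perm (Fin n)) :=
  letI := Classical.decPred fun σ : Equiv.Perm (Fin n) => IsShuffle i σ
  Finset.univ.filter fun σ => IsShuffle i σ

/-- The finite set of `(a, b, n-a-b)`-shuffles. -/
noncomputable def shuffles3 (a b n : ℕ) : Finset (Equiv.Perm (Fin n)) :=
  letI := Classical.decPred fun σ : Equiv.Perm (Fin n) => IsShuffle3 a b σ
  Finset.univ.filter fun σ => IsShuffle3 a b σ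

section NR

variable {W : Type*} [AddCommGroup W]

/-- The composition `P ∘̄ Q` entering the Nijenhuis-Richardson bracket. -/
noncomputable def nrComp (p q : ℕ) (P : (Fin (p + 1) → W) → W) (Q : (Fin (q + 1) → W) → W) :
    (Fin (p + q + 1) → W) → W := fun x =>
  ∑ σ ∈ shuffles (q + 1) (p + q + 1),
    ((Equiv.Perm.sign σ : ℤ)) •
      P (Fin.cons (Q fun i => x (σ (Fin.castLE (by omega : q + 1 ≤ p + q + 1) i)))
        fun i => x (σ (Fin.cast (by omega : q + 1 + p = p + q + 1) (Fin.natAdd (q + 1) i))))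

/-- The Nijenhuis-Richardson bracket `[P, Q]_NR = P ∘̄ Q - (-1)^{pq} Q ∘̄ P`. -/
noncomputable def nrBracket (p q : ℕ) (P : (Fin (p + 1) → W) → W) (Q : (Fin (q + 1) → W) → W) :
    (Fin (p + q + 1) → W) → W := fun x =>
  nrComp p q P Q x -
    ((-1 : ℤ) ^ (p * q)) •
      nrComp q p Q P fun i => x (Fin.cast (by omega : q + p + 1 = p + q + 1) i)

end NR

section Lift

variable {g V : Type*} [AddCommGroup g] [AddCommGroup V]

/-- The lift of a map `f : Λᵏ g ⊗ Λˡ V → g` to a cochain on `g ⊕ V`. -/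
noncomputable def liftG (k l : ℕ) (f : (Fin k → g) → (Fin l → V) → g) :
    (Fin (k + l) → g × V) → g × V := fun z =>
  (∑ τ ∈ shuffles k (k + l),
      ((Equiv.Perm.sign τ : ℤ)) •
        f (fun i => (z (τ (Fin.castAdd l i))).1) fun j => (z (τ (Fin.natAdd k j))).2, 0)

/-- The lift of a map `f : Λᵏ g ⊗ Λˡ V → V` to a cochain on `g ⊕ V`. -/
noncomputable def liftV (k l : ℕ) (f : (Fin k → g) → (Fin l → V) → V) :
    (Fin (k + l) → g × V) → g × V := fun z =>
  (0, ∑ τ ∈ shuffles k (k + l),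
      ((Equiv.Perm.sign τ : ℤ)) •
        f (fun i => (z (τ (Fin.castAdd l i))).1) fun j => (z (τ (Fin.natAdd k j))).2)

end Lift

section Bidegree

variable {g V : Type*} [Zero g] [Zero V]

/-- A cochain on `g ⊕ V` with `m` inputs has bidegree `k | l` (where `m = k + l + 1`) if on
pure tuples with `k+1` entries from `g` it takes values in `g`, on pure tuples with `k`
entries from `g` (and `l+1` from `V`) it takes values in `V`, and it vanishes on all other
pure tuples. -/
def HasBidegree (k l : ℤ) (m : ℕ) (f : (Fin m → g × V) → g × V) : Prop :=
  ∀ (z : Fin m → g × V) (S : Finset (Fin m)),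
    (∀ i ∈ S, (z i).2 = 0) → (∀ i ∉ S, (z i).1 = 0) →
      (((S.card : ℤ) = k + 1 → (f z).2 = 0) ∧
        ((S.card : ℤ) = k → (f z).1 = 0) ∧
        ((S.card : ℤ) ≠ k + 1 → (S.card : ℤ) ≠ k → f z = 0))

end Bidegree

section Ops

variable {K : Type*} [Field K] [CharZero K]
variable {g V : Type*} [AddCommGroup g] [Module K g] [AddCommGroup V] [Module K V]

/-- The lift `π = μ̂ + ρ̂` of a pair consisting of a bilinear skew bracket `μ` on `g` and a
bilinear map `ρ : g ⊗ V → V`. -/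
noncomputable def pihat (μ : AlternatingMap K g g (Fin 2)) (ρ : g →ₗ[K] V →ₗ[K] V) :
    (Fin 2 → g × V) → g × V := fun z =>
  liftG 2 0 (fun x _ => μ x) z + liftV 1 1 (fun x v => ρ (x 0) (v 0)) z

/-- The lift `T̂` of a linear map `T : V → g`. -/
noncomputable def Tha (T : V →ₗ[K] g) : (Fin 1 → g × V) → g × V :=
  liftG 0 1 fun _ v => T (v 0)

/-- Iterated Nijenhuis-Richardson bracket `[⋯[[F, T̂], T̂], ⋯, T̂]` with `n` copies of `T̂`. -/
noncomputable def adTiter (T : V →ₗ[K] g) (p : ℕ) :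
    ℕ → ((Fin (p + 1) → g × V) → g × V) → (Fin (p + 1) → g × V) → g × V
  | 0, F => F
  | n + 1, F => nrBracket p 0 (adTiter T p n F) (Tha T)

/-- `μ` satisfies the Jacobi identity, i.e. defines a Lie algebra structure on `g`. -/
def IsJacobi (μ : AlternatingMap K g g (Fin 2)) : Prop :=
  ∀ x y z : g, μ ![μ ![x, y], z] + μ ![μ ![y, z], x] + μ ![μ ![z, x], y] = 0

/-- `ρ` is a representation of the Lie algebra `(g, μ)` on `V`. -/
def IsRep (μ : AlternatingMap K g g (Fin 2)) (ρ : g →ₗ[K] V →ₗ[K] V) : Prop :=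
  ∀ (x y : g) (v : V), ρ (μ ![x, y]) v = ρ x (ρ y v) - ρ y (ρ x v)

/-- `T : V → g` is a relative Rota-Baxter operator, so `((g, μ), ρ, T)` is a relative
Rota-Baxter Lie algebra. -/
def IsRelRB (μ : AlternatingMap K g g (Fin 2)) (ρ : g →ₗ[K] V →ₗ[K] V) (T : V →ₗ[K] g) : Prop :=
  ∀ u v : V, μ ![T u, T v] = T (ρ (T u) v - ρ (T v) u)

/-- The coboundary `∂ f = (-1)^{n-1} [π, f̂]_NR` of the Lie-Rep pair `(g, μ; ρ)`, acting on a
(lifted) `n`-cochain with `n = m + 1` inputs. -/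
noncomputable def Dpartial (μ : AlternatingMap K g g (Fin 2)) (ρ : g →ₗ[K] V →ₗ[K] V)
    (m : ℕ) (F : (Fin (m + 1) → g × V) → g × V) : (Fin (m + 2) → g × V) → g × V := fun z =>
  ((-1 : ℤ) ^ m) •
    nrBracket 1 m (pihat μ ρ) F fun i => z (Fin.cast (by omega : 1 + m + 1 = m + 2) i)

/-- The coboundary `δ θ = (-1)^n [[π, T̂]_NR, θ̂]_NR` of the relative Rota-Baxter operator `T`,
acting on a (lifted) `n`-cochain `θ ∈ Hom(Λ^{n-1} V, g)` with `n - 1 = m + 1` inputs. -/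
noncomputable def Ddelta (μ : AlternatingMap K g g (Fin 2)) (ρ : g →ₗ[K] V →ₗ[K] V)
    (T : V →ₗ[K] g) (m : ℕ) (Θ : (Fin (m + 1) → g × V) → g × V) :
    (Fin (m + 2) → g × V) → g × V := fun z =>
  ((-1 : ℤ) ^ (m + 2)) •
    nrBracket 1 m (nrBracket 1 0 (pihat μ ρ) (Tha T)) Θ
      fun i => z (Fin.cast (by omega : 1 + m + 1 = m + 2) i)

/-- The operator `h_T f = (-1)^{n-2} (1/n!) [⋯[[f̂, T̂], T̂], ⋯, T̂]` (with `n` copies of `T̂`),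
acting on a (lifted) `n`-cochain with `n = m + 1` inputs. -/
noncomputable def hTop (T : V →ₗ[K] g) (m : ℕ) (F : (Fin (m + 1) → g × V) → g × V) :
    (Fin (m + 1) → g × V) → g × V := fun z =>
  (((-1 : K) ^ (m + 1)) / ((m + 1).factorial : K)) • adTiter T m (m + 1) F z

/-- The lift `f̂ = f̂_g + f̂_V` of a pair `(f_g, f_V) ∈ Hom(Λ^{m+1} g, g) ⊕ Hom(Λ^m g ⊗ V, V)`. -/
noncomputable def cochainLift (m : ℕ) (fg : (Fin (m + 1) → g) → g) (fV : (Fin m → g) → V → V) :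
    (Fin (m + 1) → g × V) → g × V := fun z =>
  liftG (m + 1) 0 (fun x _ => fg x) z + liftV m 1 (fun x v => fV x (v 0)) z

/-- The lift `θ̂` of `θ ∈ Hom(Λ^{m+1} V, g)`. -/
noncomputable def opLift (m : ℕ) (θ : (Fin (m + 1) → V) → g) : (Fin (m + 1) → g × V) → g × V :=
  fun z =>
    liftG 0 (m + 1) (fun _ v => θ v) fun i => z (Fin.cast (by omega : 0 + (m + 1) = m + 1) i)

/-- The Chevalley-Eilenberg coboundary `d_CE f = (-1)^{n-1} [μ, f]_NR` on `Hom(Λ^{m+1} g, g)`. -/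
noncomputable def dCE {h : Type*} [AddCommGroup h] (mu : (Fin 2 → h) → h) (m : ℕ)
    (f : (Fin (m + 1) → h) → h) : (Fin (m + 2) → h) → h := fun x =>
  ((-1 : ℤ) ^ m) • nrBracket 1 m mu f fun i => x (Fin.cast (by omega : 1 + m + 1 = m + 2) i)

/-- The operator `Ω` of a Rota-Baxter operator. -/
noncomputable def OmegaOp {h : Type*} [AddCommGroup h] (T : h → h) (n : ℕ)
    (f : (Fin n → h) → h) : (Fin n → h) → h := fun x =>
  ((-1 : ℤ) ^ n) •
    (f (fun i => T (x i)) - ∑ i : Fin n, T (f (Function.update (fun j => T (x j)) i (x i))))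

/-- The coboundary of the relative Rota-Baxter operator `T`, written on plain (unlifted)
cochains `Hom(Λ^{m+1} V, g) → Hom(Λ^{m+2} V, g)`. -/
noncomputable def deltaUn (μ : AlternatingMap K g g (Fin 2)) (ρ : g →ₗ[K] V →ₗ[K] V)
    (T : V →ₗ[K] g) (m : ℕ) (θ : (Fin (m + 1) → V) → g) : (Fin (m + 2) → V) → g := fun v =>
  (Ddelta μ ρ T m (opLift m θ) fun i => ((0 : g), v i)).1

end Ops


section Aux

variable {K : Type*} [Field K] {g₁ g₂ : Type*}
    [AddCommGroup g₁] [Module K g₁] [AddCommGroup g₂] [Module K g₂]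

/-- Decompose a multilinear map's arguments into pure components. -/
lemma alt_decomp (n : ℕ) (F : AlternatingMap K (g₁ × g₂) (g₁ × g₂) (Fin n))
    (w : Fin n → g₁ × g₂) :
    F w = ∑ r : Fin n → Bool,
      F (fun i => cond (r i) ((w i).1, (0 : g₂)) ((0 : g₁), (w i).2)) := by
  have hw : (fun i => ∑ b : Bool,
      cond b ((w i).1, (0 : g₂)) ((0 : g₁), (w i).2)) = w := by
    funext i
    simp [Fintype.sum_bool, Prod.ext_iff]
  have := F.toMultilinearMap.map_sum
    (g := fun (i : Fin n) (b : Bool) => cond b ((w i).1, (0 : g₂)) ((0 : g₁), (w i).2))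
  rw [hw] at this
  exact this

lemma pure_snd_or_zero (n : ℕ) (F : AlternatingMap K (g₁ × g₂) (g₁ × g₂) (Fin (n + 1)))
    {l : ℤ} (hF : HasBidegree (-1) l (n + 1) ⇑F) (w : Fin (n + 1) → g₁ × g₂)
    (r : Fin (n + 1) → Bool) :
    (F (fun i => cond (r i) ((w i).1, (0 : g₂)) ((0 : g₁), (w i).2))).2 = 0 ∧
      (r 0 = true →
        F (fun i => cond (r i) ((w i).1, (0 : g₂)) ((0 : g₁), (w i).2)) = 0) := by
  classical
  set zz : Fin (n + 1) → g₁ × g₂ :=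
    fun i => cond (r i) ((w i).1, (0 : g₂)) ((0 : g₁), (w i).2) with hzz
  set S : Finset (Fin (n + 1)) := Finset.univ.filter fun i => r i = true with hS
  obtain ⟨h1, _h2, h3⟩ := hF zz S
    (by
      intro i hi
      have : r i = true := by simpa [hS] using hi
      simp [hzz, this])
    (by
      intro i hi
      have : r i = false := by
        have := (by simpa [hS] using hi : ¬ r i = true)
        simpa using this
      simp [hzz, this])
  constructor
  · by_cases hc : S.card = 0
    · exact h1 (by simp [hc])
    · have hz : F zz = 0 := h3 (by exact_mod_cast (by omega : (S.card : ℤ) ≠ -1 + 1))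
        (by omega)
      simp [hz]
  · intro hr
    have h0 : (0 : Fin (n + 1)) ∈ S := by simp [hS, hr]
    have hc : 0 < S.card := Finset.card_pos.mpr ⟨0, h0⟩
    exact h3 (by exact_mod_cast (by omega : (S.card : ℤ) ≠ -1 + 1)) (by omega)

lemma snd_eq_zero_of_bidegree (n : ℕ) (F : AlternatingMap K (g₁ × g₂) (g₁ × g₂) (Fin (n + 1)))
    {l : ℤ} (hF : HasBidegree (-1) l (n + 1) ⇑F) (w : Fin (n + 1) → g₁ × g₂) :
    (F w).2 = 0 := by
  rw [alt_decomp, Prod.snd_sum]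
  exact Finset.sum_eq_zero fun r _ => (pure_snd_or_zero n F hF w r).1

lemma eq_zero_of_fst_arg (n : ℕ) (F : AlternatingMap K (g₁ × g₂) (g₁ × g₂) (Fin (n + 1)))
    {l : ℤ} (hF : HasBidegree (-1) l (n + 1) ⇑F) (w : Fin (n + 1) → g₁ × g₂)
    (h0 : (w 0).2 = 0) : F w = 0 := by
  rw [alt_decomp]
  refine Finset.sum_eq_zero fun r _ => ?_
  by_cases hr : r 0 = true
  · exact (pure_snd_or_zero n F hF w r).2 hr
  · have hr' : r 0 = false := by simpa using hr
    exact F.toMultilinearMap.map_coord_zero 0 (by simp [hr', h0, Prod.ext_iff])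

end Aux

/-- If `f` has bidegree `-1 | k` and `g` has bidegree `-1 | l`, then
`[f, g]_NR = 0`; consequently `⊕_{l ≥ 1} C^{-1|l}(g₁ ⊕ g₂, g₁ ⊕ g₂)` is an abelian graded Lie
subalgebra of `(C*(g₁ ⊕ g₂, g₁ ⊕ g₂), [·,·]_NR)`. -/
theorem nrBracket_eq_zero_of_hasBidegree_neg_one
    {K : Type*} [Field K] [CharZero K] {g₁ g₂ : Type*}
    [AddCommGroup g₁] [Module K g₁] [AddCommGroup g₂] [Module K g₂]
    (c d : ℕ)
    (F : AlternatingMap K (g₁ × g₂) (g₁ × g₂) (Fin (c + 1)))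
    (G : AlternatingMap K (g₁ × g₂) (g₁ × g₂) (Fin (d + 1)))
    (hF : HasBidegree (-1) ((c : ℤ) + 1) (c + 1) ⇑F)
    (hG : HasBidegree (-1) ((d : ℤ) + 1) (d + 1) ⇑G) :
    (∀ z : Fin (c + d + 1) → g₁ × g₂, nrBracket c d ⇑F ⇑G z = 0) ∧
      HasBidegree (-1) ((c : ℤ) + (d : ℤ) + 1) (c + d + 1) (nrBracket c d ⇑F ⇑G) := by
  have hzero : ∀ z : Fin (c + d + 1) → g₁ × g₂, nrBracket c d ⇑F ⇑G z = 0 := by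
    intro z
    have hFG : nrComp c d ⇑F ⇑G z = 0 := by
      unfold nrComp
      refine Finset.sum_eq_zero fun σ _ => ?_
      rw [eq_zero_of_fst_arg c F hF _
        (by simpa using snd_eq_zero_of_bidegree d G hG _)]
      simp
    have hGF : nrComp d c ⇑G ⇑F
        (fun i => z (Fin.cast (by omega : d + c + 1 = c + d + 1) i)) = 0 := by
      unfold nrComp
      refine Finset.sum_eq_zero fun σ _ => ?_
      rw [eq_zero_of_fst_arg d G hG _
        (by simpa using snd_eq_zero_of_bidegree c F hF _)]
      simp
    simp [nrBracket, hFG, hGF]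
  refine ⟨hzero, ?_⟩
  intro z S _ _
  refine ⟨fun _ => ?_, fun _ => ?_, fun _ _ => ?_⟩ <;> simp [hzero z]
end RBPaper
end

section
/- Let g and V be vector spaces, μ ∈ Hom(Λ²g, g), ρ ∈ Hom(g⊗V, V) and T ∈ Hom(V, g), and set π := μ̂ + ρ̂. Then ((g,μ), ρ, T) is a relative Rota–Baxter Lie algebra if and only if [π,π]_NR = 0 and [[π, T̂]_NR, T̂]_NR = 0. (This is the content of the characterization of relative Rota–Baxter Lie algebras as Maurer–Cartan elements of the L∞-algebra obtained from the V-data construction.) -/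
open BigOperators

namespace RBPaper

section AuxShuffles

set_option linter.unusedSectionVars false

instance {n i : ℕ} (σ : Equiv.Perm (Fin n)) : Decidable (IsShuffle i σ) := by
  unfold IsShuffle; infer_instance

lemma mem_shuffles {n i : ℕ} (σ : Equiv.Perm (Fin n)) : σ ∈ shuffles i n ↔ IsShuffle i σ := by
  simp [shuffles, Finset.mem_filter]

lemma shuffles_0_1 : shuffles 0 1 = {1} := by
  ext σ; rw [mem_shuffles]; revert σ; decide

lemma shuffles_2_2 : shuffles 2 2 = {1} := by
  ext σ; rw [mem_shuffles]; revert σ; decide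

lemma shuffles_1_2 : shuffles 1 2 = {1, Equiv.swap 0 1} := by
  ext σ; rw [mem_shuffles]; revert σ; decide

lemma shuffles_2_3 : shuffles 2 3 = {1, Equiv.swap 1 2, finRotate 3} := by
  ext σ; rw [mem_shuffles]; revert σ; decide

end AuxShuffles

section AuxNR

variable {W : Type*} [AddCommGroup W]

lemma nrComp_one_one (P Q : (Fin 2 → W) → W) (z : Fin 3 → W) :
    nrComp 1 1 P Q z
      = P ![Q ![z 0, z 1], z 2] - P ![Q ![z 0, z 2], z 1] + P ![Q ![z 1, z 2], z 0] := by
  have e : ∀ σ : Equiv.Perm (Fin 3),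
      P (Fin.cons (Q fun i => z (σ (Fin.castLE (by omega : 1 + 1 ≤ 1 + 1 + 1) i)))
          fun i => z (σ (Fin.cast (by omega : 1 + 1 + 1 = 1 + 1 + 1) (Fin.natAdd (1 + 1) i))))
        = P ![Q ![z (σ 0), z (σ 1)], z (σ 2)] := by
    intro σ
    congr 1
    funext j
    refine Fin.cases ?_ (fun j => ?_) j
    · rw [Fin.cons_zero]
      show Q _ = Q ![z (σ 0), z (σ 1)]
      congr 1
      funext i; fin_cases i <;> rfl
    · rw [Fin.cons_succ]
      fin_cases j <;> rfl
  have hshuf : shuffles (1 + 1) (1 + 1 + 1)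
      = ({1, Equiv.swap 1 2, finRotate 3} : Finset (Equiv.Perm (Fin 3))) := shuffles_2_3
  unfold nrComp
  rw [hshuf, Finset.sum_insert (by decide), Finset.sum_insert (by decide),
    Finset.sum_singleton, e 1, e (Equiv.swap 1 2), e (finRotate 3)]
  have s1 : ((Equiv.Perm.sign (1 : Equiv.Perm (Fin 3))) : ℤ) = 1 := by decide
  have s2 : ((Equiv.Perm.sign (Equiv.swap (1 : Fin 3) 2)) : ℤ) = -1 := by decide
  have s3 : ((Equiv.Perm.sign (finRotate 3)) : ℤ) = 1 := by decide
  rw [s1, s2, s3]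
  have a0 : ((1 : Equiv.Perm (Fin 3)) 0) = 0 := rfl
  have a1 : ((1 : Equiv.Perm (Fin 3)) 1) = 1 := rfl
  have a2 : ((1 : Equiv.Perm (Fin 3)) 2) = 2 := rfl
  have b0 : ((Equiv.swap (1 : Fin 3) 2) 0) = 0 := by decide
  have b1 : ((Equiv.swap (1 : Fin 3) 2) 1) = 2 := by decide
  have b2 : ((Equiv.swap (1 : Fin 3) 2) 2) = 1 := by decide
  have c0 : ((finRotate 3) (0 : Fin 3)) = 1 := by decide
  have c1 : ((finRotate 3) (1 : Fin 3)) = 2 := by decide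
  have c2 : ((finRotate 3) (2 : Fin 3)) = 0 := by decide
  rw [a0, a1, a2, b0, b1, b2, c0, c1, c2]
  simp only [one_smul, neg_smul]
  abel

lemma nrComp_one_zero (P : (Fin 2 → W) → W) (Q : (Fin 1 → W) → W) (z : Fin 2 → W) :
    nrComp 1 0 P Q z = P ![Q ![z 0], z 1] - P ![Q ![z 1], z 0] := by
  have e : ∀ σ : Equiv.Perm (Fin 2),
      P (Fin.cons (Q fun i => z (σ (Fin.castLE (by omega : 0 + 1 ≤ 1 + 0 + 1) i)))
          fun i => z (σ (Fin.cast (by omega : 0 + 1 + 1 = 1 + 0 + 1) (Fin.natAdd (0 + 1) i))))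
        = P ![Q ![z (σ 0)], z (σ 1)] := by
    intro σ
    congr 1
    funext j
    refine Fin.cases ?_ (fun j => ?_) j
    · rw [Fin.cons_zero]
      show Q _ = Q ![z (σ 0)]
      congr 1
      funext i; fin_cases i <;> rfl
    · rw [Fin.cons_succ]
      fin_cases j <;> rfl
  have hshuf : shuffles (0 + 1) (1 + 0 + 1)
      = ({1, Equiv.swap 0 1} : Finset (Equiv.Perm (Fin 2))) := shuffles_1_2
  unfold nrComp
  rw [hshuf, Finset.sum_insert (by decide), Finset.sum_singleton,
    e 1, e (Equiv.swap 0 1)]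
  have s1 : ((Equiv.Perm.sign (1 : Equiv.Perm (Fin 2))) : ℤ) = 1 := by decide
  have s2 : ((Equiv.Perm.sign (Equiv.swap (0 : Fin 2) 1)) : ℤ) = -1 := by decide
  rw [s1, s2]
  have a0 : ((1 : Equiv.Perm (Fin 2)) 0) = 0 := rfl
  have a1 : ((1 : Equiv.Perm (Fin 2)) 1) = 1 := rfl
  have b0 : ((Equiv.swap (0 : Fin 2) 1) 0) = 1 := by decide
  have b1 : ((Equiv.swap (0 : Fin 2) 1) 1) = 0 := by decide
  rw [a0, a1, b0, b1]
  simp only [one_smul, neg_smul]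
  abel

lemma nrComp_zero_one (Q : (Fin 1 → W) → W) (P : (Fin 2 → W) → W) (z : Fin 2 → W) :
    nrComp 0 1 Q P z = Q ![P ![z 0, z 1]] := by
  have e : ∀ σ : Equiv.Perm (Fin 2),
      Q (Fin.cons (P fun i => z (σ (Fin.castLE (by omega : 1 + 1 ≤ 0 + 1 + 1) i)))
          fun i => z (σ (Fin.cast (by omega : 1 + 1 + 0 = 0 + 1 + 1) (Fin.natAdd (1 + 1) i))))
        = Q ![P ![z (σ 0), z (σ 1)]] := by
    intro σ
    congr 1
    funext j
    refine Fin.cases ?_ (fun j => j.elim0) j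
    · rw [Fin.cons_zero]
      show P _ = P ![z (σ 0), z (σ 1)]
      congr 1
      funext i; fin_cases i <;> rfl
  have hshuf : shuffles (1 + 1) (0 + 1 + 1)
      = ({1} : Finset (Equiv.Perm (Fin 2))) := shuffles_2_2
  unfold nrComp
  rw [hshuf, Finset.sum_singleton, e 1]
  have s1 : ((Equiv.Perm.sign (1 : Equiv.Perm (Fin 2))) : ℤ) = 1 := by decide
  have a0 : ((1 : Equiv.Perm (Fin 2)) 0) = 0 := rfl
  have a1 : ((1 : Equiv.Perm (Fin 2)) 1) = 1 := rfl
  rw [s1, a0, a1, one_smul]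

lemma nrBracket_one_one (P Q : (Fin 2 → W) → W) (z : Fin 3 → W) :
    nrBracket 1 1 P Q z = nrComp 1 1 P Q z + nrComp 1 1 Q P z := by
  unfold nrBracket
  have hz : (fun i => z (Fin.cast (by omega : 1 + 1 + 1 = 1 + 1 + 1) i)) = z := rfl
  rw [hz]
  norm_num

lemma nrBracket_one_zero (P : (Fin 2 → W) → W) (Q : (Fin 1 → W) → W) (z : Fin 2 → W) :
    nrBracket 1 0 P Q z = nrComp 1 0 P Q z - nrComp 0 1 Q P z := by
  unfold nrBracket
  have hz : (fun i => z (Fin.cast (by omega : 0 + 1 + 1 = 1 + 0 + 1) i)) = z := rfl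
  rw [hz]
  norm_num

end AuxNR


section AuxOps

set_option linter.unusedSectionVars false

variable {K : Type*} [Field K] [CharZero K]
variable {g V : Type*} [AddCommGroup g] [Module K g] [AddCommGroup V] [Module K V]

lemma pihat_apply (μ : AlternatingMap K g g (Fin 2)) (ρ : g →ₗ[K] V →ₗ[K] V)
    (z : Fin 2 → g × V) :
    pihat μ ρ z = (μ ![(z 0).1, (z 1).1],
      ρ (z 0).1 (z 1).2 - ρ (z 1).1 (z 0).2) := by
  have h22 : shuffles 2 (2 + 0) = {1} := shuffles_2_2
  have h12 : shuffles 1 (1 + 1) = {1, Equiv.swap 0 1} := shuffles_1_2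
  have hne : (1 : Equiv.Perm (Fin 2)) ≠ Equiv.swap 0 1 := by decide
  simp only [pihat, liftG, liftV, h22, h12, Finset.sum_pair hne, Finset.sum_singleton,
    Prod.mk_add_mk, add_zero, zero_add]
  refine Prod.ext ?_ ?_
  · show (Equiv.Perm.sign (1 : Equiv.Perm (Fin 2)) : ℤ) • μ _ = _
    have hμ : (fun i => (z ((1 : Equiv.Perm (Fin 2)) (Fin.castAdd 0 i))).1)
        = ![(z 0).1, (z 1).1] := by
      funext i; fin_cases i <;> rfl
    rw [hμ]; simp
  · have e1 : ((1 : Equiv.Perm (Fin 2)) (Fin.castAdd 1 (0 : Fin 1))) = 0 := by decide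
    have e2 : ((1 : Equiv.Perm (Fin 2)) (Fin.natAdd 1 (0 : Fin 1))) = 1 := by decide
    have e3 : ((Equiv.swap (0 : Fin 2) 1) (Fin.castAdd 1 (0 : Fin 1))) = 1 := by decide
    have e4 : ((Equiv.swap (0 : Fin 2) 1) (Fin.natAdd 1 (0 : Fin 1))) = 0 := by decide
    have s1 : ((Equiv.Perm.sign (1 : Equiv.Perm (Fin 2))) : ℤ) = 1 := by decide
    have s2 : ((Equiv.Perm.sign (Equiv.swap (0 : Fin 2) 1)) : ℤ) = -1 := by decide
    show _ • (ρ (z ((1 : Equiv.Perm (Fin 2)) (Fin.castAdd 1 (0 : Fin 1)))).1) _ + _ = _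
    rw [e1, e2, e3, e4, s1, s2]
    simp [sub_eq_add_neg]

lemma Tha_apply (T : V →ₗ[K] g) (z : Fin 1 → g × V) : Tha T z = (T (z 0).2, 0) := by
  have h : shuffles 0 (0 + 1) = {1} := shuffles_0_1
  simp [Tha, liftG, h]

lemma mu_swap (μ : AlternatingMap K g g (Fin 2)) (a b : g) : μ ![a, b] = -μ ![b, a] := by
  have h := μ.map_swap ![b, a] (by decide : (0 : Fin 2) ≠ 1)
  have hv : (![b, a] ∘ Equiv.swap (0 : Fin 2) 1) = ![a, b] := by
    funext i; fin_cases i <;> simp [Equiv.swap_apply_def]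
  rw [hv] at h
  rw [h]

lemma mu_zero_left (μ : AlternatingMap K g g (Fin 2)) (b : g) : μ ![0, b] = 0 :=
  μ.map_coord_zero 0 rfl

lemma mu_neg_left (μ : AlternatingMap K g g (Fin 2)) (a b : g) : μ ![-a, b] = -μ ![a, b] := by
  have h0 : μ ![a + -a, b] = 0 := by
    rw [add_neg_cancel]; exact mu_zero_left μ b
  have hadd : μ ![a + -a, b] = μ ![a, b] + μ ![-a, b] := by
    have h1 : (![a + -a, b] : Fin 2 → g) = Function.update ![a, b] 0 (a + -a) := by
      funext i; fin_cases i <;> simp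
    have h2 : (![a, b] : Fin 2 → g) = Function.update ![a, b] 0 a := by
      funext i; fin_cases i <;> simp
    have h3 : (![-a, b] : Fin 2 → g) = Function.update ![a, b] 0 (-a) := by
      funext i; fin_cases i <;> simp
    rw [h1, μ.map_update_add ![a, b] 0 a (-a), ← h2, ← h3]
  rw [hadd] at h0
  exact eq_neg_of_add_eq_zero_right h0

lemma Bform (μ : AlternatingMap K g g (Fin 2)) (ρ : g →ₗ[K] V →ₗ[K] V) (T : V →ₗ[K] g)
    (z : Fin 2 → g × V) :
    nrBracket 1 0 (pihat μ ρ) (Tha T) z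
      = (μ ![T (z 0).2, (z 1).1] - μ ![T (z 1).2, (z 0).1]
            - T (ρ (z 0).1 (z 1).2) + T (ρ (z 1).1 (z 0).2),
          ρ (T (z 0).2) (z 1).2 - ρ (T (z 1).2) (z 0).2) := by
  rw [nrBracket_one_zero, nrComp_one_zero, nrComp_zero_one]
  rw [Tha_apply, Tha_apply, Tha_apply, pihat_apply, pihat_apply, pihat_apply]
  simp only [Matrix.cons_val_zero, Matrix.cons_val_one, Matrix.head_cons, map_zero,
    LinearMap.zero_apply, map_sub, sub_zero, Prod.mk_sub_mk]
  refine Prod.ext ?_ ?_ <;> simp <;> abel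

lemma Cform (μ : AlternatingMap K g g (Fin 2)) (ρ : g →ₗ[K] V →ₗ[K] V) (T : V →ₗ[K] g)
    (z : Fin 2 → g × V) :
    nrBracket 1 0 (nrBracket 1 0 (pihat μ ρ) (Tha T)) (Tha T) z
      = ((μ ![T (z 0).2, T (z 1).2] - T (ρ (T (z 0).2) (z 1).2) + T (ρ (T (z 1).2) (z 0).2))
          + (μ ![T (z 0).2, T (z 1).2] - T (ρ (T (z 0).2) (z 1).2) + T (ρ (T (z 1).2) (z 0).2)),
          0) := by
  rw [nrBracket_one_zero, nrComp_one_zero, nrComp_zero_one]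
  rw [Tha_apply, Tha_apply, Tha_apply, Bform, Bform, Bform]
  simp only [Matrix.cons_val_zero, Matrix.cons_val_one, Matrix.head_cons, map_zero,
    LinearMap.zero_apply, map_sub, sub_zero, zero_sub, mu_zero_left]
  refine Prod.ext ?_ ?_
  · simp only [Prod.fst_sub, Prod.fst_add]
    rw [mu_swap μ (T (z 1).2) (T (z 0).2)]
    simp
    abel
  · simp

lemma Pcomp (μ : AlternatingMap K g g (Fin 2)) (ρ : g →ₗ[K] V →ₗ[K] V) (z : Fin 3 → g × V) :
    nrComp 1 1 (pihat μ ρ) (pihat μ ρ) z =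
      (μ ![μ ![(z 0).1, (z 1).1], (z 2).1] - μ ![μ ![(z 0).1, (z 2).1], (z 1).1]
          + μ ![μ ![(z 1).1, (z 2).1], (z 0).1],
        (ρ (μ ![(z 0).1, (z 1).1]) (z 2).2
            - ρ (z 2).1 (ρ (z 0).1 (z 1).2 - ρ (z 1).1 (z 0).2))
          - (ρ (μ ![(z 0).1, (z 2).1]) (z 1).2
            - ρ (z 1).1 (ρ (z 0).1 (z 2).2 - ρ (z 2).1 (z 0).2))
          + (ρ (μ ![(z 1).1, (z 2).1]) (z 0).2
            - ρ (z 0).1 (ρ (z 1).1 (z 2).2 - ρ (z 2).1 (z 1).2))) := by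
  rw [nrComp_one_one]
  simp only [pihat_apply, Matrix.cons_val_zero, Matrix.cons_val_one, Matrix.head_cons,
    Prod.mk_sub_mk, Prod.mk_add_mk]

lemma halve {M : Type*} [AddCommGroup M] [Module K M] {x : M} (h : x + x = 0) : x = 0 := by
  have h2 : (2 : K) • x = 0 := by rw [two_smul]; exact h
  have h3 : ((2 : K)⁻¹ * 2) • x = (2 : K)⁻¹ • ((2 : K) • x) := mul_smul _ _ _
  rw [h2, smul_zero, inv_mul_cancel₀ (two_ne_zero), one_smul] at h3
  exact h3

end AuxOps


/-- `((g, μ), ρ, T)` is a relative Rota-Baxter Lie algebra if and only if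
`[π, π]_NR = 0` and `[[π, T̂]_NR, T̂]_NR = 0`, i.e. `(s⁻¹π, T)` is a Maurer-Cartan element of
the `L∞`-algebra obtained from the V-data construction. -/
theorem relRB_iff_maurerCartan
    {K : Type*} [Field K] [CharZero K] {g V : Type*}
    [AddCommGroup g] [Module K g] [AddCommGroup V] [Module K V]
    (μ : AlternatingMap K g g (Fin 2)) (ρ : g →ₗ[K] V →ₗ[K] V) (T : V →ₗ[K] g) :
    (IsJacobi μ ∧ IsRep μ ρ ∧ IsRelRB μ ρ T) ↔
      ((∀ z : Fin 3 → g × V, nrBracket 1 1 (pihat μ ρ) (pihat μ ρ) z = 0) ∧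
        (∀ z : Fin 2 → g × V,
          nrBracket 1 0 (nrBracket 1 0 (pihat μ ρ) (Tha T)) (Tha T) z = 0)) := by
  constructor
  · rintro ⟨hJ, hR, hT⟩
    constructor
    · intro z
      rw [nrBracket_one_one, Pcomp]
      have hJ0 : μ ![μ ![(z 0).1, (z 1).1], (z 2).1] - μ ![μ ![(z 0).1, (z 2).1], (z 1).1]
          + μ ![μ ![(z 1).1, (z 2).1], (z 0).1] = 0 := by
        have h := hJ (z 0).1 (z 1).1 (z 2).1
        have hn : μ ![μ ![(z 2).1, (z 0).1], (z 1).1]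
            = -μ ![μ ![(z 0).1, (z 2).1], (z 1).1] := by
          rw [mu_swap μ (z 2).1 (z 0).1, mu_neg_left]
        rw [hn] at h
        abel_nf at h ⊢
        exact h
      have hR0 : (ρ (μ ![(z 0).1, (z 1).1]) (z 2).2
            - ρ (z 2).1 (ρ (z 0).1 (z 1).2 - ρ (z 1).1 (z 0).2))
          - (ρ (μ ![(z 0).1, (z 2).1]) (z 1).2
            - ρ (z 1).1 (ρ (z 0).1 (z 2).2 - ρ (z 2).1 (z 0).2))
          + (ρ (μ ![(z 1).1, (z 2).1]) (z 0).2
            - ρ (z 0).1 (ρ (z 1).1 (z 2).2 - ρ (z 2).1 (z 1).2)) = 0 := by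
        rw [hR (z 0).1 (z 1).1 (z 2).2, hR (z 0).1 (z 2).1 (z 1).2,
          hR (z 1).1 (z 2).1 (z 0).2]
        simp only [map_sub]
        abel
      rw [hJ0, hR0]
      simp
    · intro z
      rw [Cform]
      have h0 : μ ![T (z 0).2, T (z 1).2] - T (ρ (T (z 0).2) (z 1).2)
          + T (ρ (T (z 1).2) (z 0).2) = 0 := by
        rw [hT (z 0).2 (z 1).2, map_sub]
        abel
      rw [h0]
      simp
  · rintro ⟨h1, h2⟩
    refine ⟨?_, ?_, ?_⟩
    · intro x y w
      have h := h1 ![(x, 0), (y, 0), (w, 0)]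
      rw [nrBracket_one_one, Pcomp] at h
      have h' : ((μ ![μ ![x, y], w] - μ ![μ ![x, w], y] + μ ![μ ![y, w], x],
          (ρ (μ ![x, y]) ((0 : V)) - ρ w (ρ x 0 - ρ y 0))
            - (ρ (μ ![x, w]) (0 : V) - ρ y (ρ x 0 - ρ w 0))
            + (ρ (μ ![y, w]) (0 : V) - ρ x (ρ y 0 - ρ w 0))) : g × V)
          + (μ ![μ ![x, y], w] - μ ![μ ![x, w], y] + μ ![μ ![y, w], x],
          (ρ (μ ![x, y]) ((0 : V)) - ρ w (ρ x 0 - ρ y 0))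
            - (ρ (μ ![x, w]) (0 : V) - ρ y (ρ x 0 - ρ w 0))
            + (ρ (μ ![y, w]) (0 : V) - ρ x (ρ y 0 - ρ w 0))) = 0 := h
      rw [Prod.mk_add_mk, Prod.mk_eq_zero] at h'
      have hJ0 := halve (K := K) h'.1
      have hn : μ ![μ ![w, x], y] = -μ ![μ ![x, w], y] := by
        rw [mu_swap μ w x, mu_neg_left]
      rw [hn]
      abel_nf at hJ0 ⊢
      exact hJ0
    · intro x y v
      have h := h1 ![(x, 0), (y, 0), ((0 : g), v)]
      rw [nrBracket_one_one, Pcomp] at h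
      have h' : ((μ ![μ ![x, y], (0 : g)] - μ ![μ ![x, 0], y] + μ ![μ ![y, 0], x],
          (ρ (μ ![x, y]) v - ρ 0 (ρ x 0 - ρ y 0))
            - (ρ (μ ![x, 0]) (0 : V) - ρ y (ρ x v - ρ 0 0))
            + (ρ (μ ![y, 0]) (0 : V) - ρ x (ρ y v - ρ 0 0))) : g × V)
          + (μ ![μ ![x, y], (0 : g)] - μ ![μ ![x, 0], y] + μ ![μ ![y, 0], x],
          (ρ (μ ![x, y]) v - ρ 0 (ρ x 0 - ρ y 0))
            - (ρ (μ ![x, 0]) (0 : V) - ρ y (ρ x v - ρ 0 0))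
            + (ρ (μ ![y, 0]) (0 : V) - ρ x (ρ y v - ρ 0 0))) = 0 := h
      rw [Prod.mk_add_mk, Prod.mk_eq_zero] at h'
      have hR0 := halve (K := K) h'.2
      simp only [map_zero, LinearMap.zero_apply, sub_zero, zero_sub, map_neg] at hR0
      rw [eq_sub_iff_add_eq, ← sub_eq_zero]
      abel_nf at hR0 ⊢
      exact hR0
    · intro u v
      have h := h2 ![((0 : g), u), ((0 : g), v)]
      rw [Cform] at h
      have h' : ((μ ![T u, T v] - T (ρ (T u) v) + T (ρ (T v) u))
          + (μ ![T u, T v] - T (ρ (T u) v) + T (ρ (T v) u)), (0 : V)) = (0 : g × V) := h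
      rw [Prod.mk_eq_zero] at h'
      have h0 := halve (K := K) h'.1
      rw [map_sub, eq_sub_iff_add_eq, ← sub_eq_zero]
      abel_nf at h0 ⊢
      exact h0
end RBPaper
end

section
/- Let φ: g → Der(h) be an action of a Lie algebra (g,[·,·]_g) on a Lie algebra (h,[·,·]_h), λ ∈ K, and equip L := ⊕_{n≥0} Hom(Λⁿh, g) with the differential graded Lie algebra structure (⟦·,·⟧, d) associated to φ and λ. Then a linear map T: h → g is a relative Rota–Baxter operator of weight λ (i.e., [Tu, Tv]_g = T(φ(Tu)v − φ(Tv)u + λ[u,v]_h) for all u,v ∈ h) if and only if T is a Maurer–Cartan element of this differential graded Lie algebra, i.e., dT + (1/2)⟦T, T⟧ = 0. -/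
open BigOperators

namespace RBPaper

section Weight

variable {K : Type*} [Field K] [CharZero K]
variable {gL : Type*} [LieRing gL] [LieAlgebra K gL]
variable {hL : Type*} [LieRing hL] [LieAlgebra K hL]

/-- The differential `d` of weight `λ` on `⊕ₙ Hom(Λⁿ h, g)`:
`(dG)(v₁,…,v_{n+1}) = Σ_{i<j} (-1)^{n+i+j-1} G(λ[vᵢ, vⱼ]_h, v₁,…,v̂ᵢ,…,v̂ⱼ,…,v_{n+1})`
(indices `i, j` being 1-based in the displayed formula). -/
noncomputable def dW (lam : K) (n : ℕ) (G : (Fin n → hL) → gL) : (Fin (n + 1) → hL) → gL :=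
  fun v =>
    ∑ p : Fin (n + 1) × Fin (n + 1),
      if hij : (p.1 : ℕ) < (p.2 : ℕ) then
        ((-1 : ℤ) ^ (n + (p.1 : ℕ) + (p.2 : ℕ) + 1)) •
          G (fun k =>
            (Fin.cons (lam • ⁅v p.1, v p.2⁆)
              (fun t : Fin (n - 1) =>
                v (p.2.succAbove
                    (Fin.cast (by have := p.2.isLt; omega : n - 1 + 1 = n)
                      ((Fin.cast (by have := p.2.isLt; omega : n = n - 1 + 1)
                          (Fin.castLT p.1 (by have := p.2.isLt; omega))).succAbove t)))) :
              Fin (n - 1 + 1) → hL)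
              (Fin.cast (by have := p.2.isLt; omega : n = n - 1 + 1) k))
      else 0

/-- The graded Lie bracket `⟦g₁, g₂⟧` on `⊕ₙ Hom(Λⁿ h, g)` associated to an action
`φ : g → Der(h)`. -/
noncomputable def bracketW (φ : gL →ₗ⁅K⁆ LieDerivation K hL hL) (n m : ℕ)
    (g₁ : (Fin n → hL) → gL) (g₂ : (Fin m → hL) → gL) : (Fin (n + m) → hL) → gL := fun v =>
  (if hn : 1 ≤ n then
      ∑ σ ∈ shuffles3 m 1 (n + m),
        (-((Equiv.Perm.sign σ : ℤ))) •
          g₁ (fun k =>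
            (Fin.cons
              (φ (g₂ fun i => v (σ (Fin.castLE (by omega : m ≤ n + m) i)))
                (v (σ ⟨m, by omega⟩)))
              (fun t : Fin (n - 1) => v (σ ⟨m + 1 + (t : ℕ), by have := t.isLt; omega⟩)) :
              Fin (n - 1 + 1) → hL)
              (Fin.cast (by omega : n = n - 1 + 1) k))
    else 0) +
  (if hm : 1 ≤ m then
      ∑ σ ∈ shuffles3 n 1 (n + m),
        (((-1 : ℤ) ^ (m * n)) * ((Equiv.Perm.sign σ : ℤ))) •
          g₂ (fun k =>
            (Fin.cons
              (φ (g₁ fun i => v (σ (Fin.castLE (by omega : n ≤ n + m) i)))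
                (v (σ ⟨n, by omega⟩)))
              (fun t : Fin (m - 1) => v (σ ⟨n + 1 + (t : ℕ), by have := t.isLt; omega⟩)) :
              Fin (m - 1 + 1) → hL)
              (Fin.cast (by omega : m = m - 1 + 1) k))
    else 0) +
  ∑ σ ∈ shuffles n (n + m),
    (-(((-1 : ℤ) ^ (m * n)) * ((Equiv.Perm.sign σ : ℤ)))) •
      ⁅g₁ fun i => v (σ (Fin.castAdd m i)), g₂ fun j => v (σ (Fin.natAdd n j))⁆

end Weight


section MainAux
variable {K : Type*} [Field K] [CharZero K]
variable {gL : Type*} [LieRing gL] [LieAlgebra K gL]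
variable {hL : Type*} [LieRing hL] [LieAlgebra K hL]

lemma shuffles_12 : shuffles 1 2 = Finset.univ := by
  rw [shuffles]
  letI := Classical.decPred fun σ : Equiv.Perm (Fin 2) => IsShuffle 1 σ
  apply Finset.filter_true_of_mem
  intro σ _
  constructor
  · intro a b hab hb; exact absurd (Fin.lt_def.mp hab) (by omega)
  · intro a b hab ha; have := b.isLt; exact absurd (Fin.lt_def.mp hab) (by omega)

lemma shuffles3_112 : shuffles3 1 1 2 = Finset.univ := by
  rw [shuffles3]
  letI := Classical.decPred fun σ : Equiv.Perm (Fin 2) => IsShuffle3 1 1 σ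
  apply Finset.filter_true_of_mem
  intro σ _
  refine ⟨?_, ?_, ?_⟩
  · intro p q hpq hq; exact absurd (Fin.lt_def.mp hpq) (by omega)
  · intro p q hpq hp hq; exact absurd (Fin.lt_def.mp hpq) (by omega)
  · intro p q hpq hp; have := q.isLt; exact absurd (Fin.lt_def.mp hpq) (by omega)

lemma univ_perm2 : (Finset.univ : Finset (Equiv.Perm (Fin 2))) = {1, Equiv.swap 0 1} := by
  decide

omit [CharZero K] in
lemma dW_eval (lam : K) (T : hL →ₗ[K] gL) (v : Fin 2 → hL) :
    dW lam 1 (fun w : Fin 1 → hL => T (w 0)) v = -T (lam • ⁅v 0, v 1⁆) := by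
  rw [dW]
  rw [Fintype.sum_prod_type]
  simp [Fin.sum_univ_two, Fin.isValue]

omit [CharZero K] in
lemma bracketW_eval (φ : gL →ₗ⁅K⁆ LieDerivation K hL hL) (T : hL →ₗ[K] gL) (v : Fin 2 → hL) :
    bracketW φ 1 1 (fun w : Fin 1 → hL => T (w 0)) (fun w : Fin 1 → hL => T (w 0)) v =
      (-T (φ (T (v 0)) (v 1)) + T (φ (T (v 1)) (v 0))) +
        (-T (φ (T (v 0)) (v 1)) + T (φ (T (v 1)) (v 0))) +
        (⁅T (v 0), T (v 1)⁆ + ⁅T (v 0), T (v 1)⁆) := by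
  rw [bracketW, shuffles3_112, shuffles_12, univ_perm2, dif_pos (le_refl 1),
    dif_pos (le_refl 1),
    Finset.sum_pair (by decide : (1 : Equiv.Perm (Fin 2)) ≠ Equiv.swap 0 1),
    Finset.sum_pair (by decide : (1 : Equiv.Perm (Fin 2)) ≠ Equiv.swap 0 1),
    Finset.sum_pair (by decide : (1 : Equiv.Perm (Fin 2)) ≠ Equiv.swap 0 1)]
  simp [Equiv.Perm.sign_swap (by decide : (0 : Fin 2) ≠ 1), Equiv.swap_apply_left,
    Equiv.swap_apply_right, Fin.isValue, Fin.castAdd, Fin.castLE]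

lemma half_collapse (a b c : gL) :
    (2 : K)⁻¹ • ((a + b) + (a + b) + (c + c)) = a + b + c := by
  have h : (a + b) + (a + b) + (c + c) = (2 : K) • (a + b + c) := by
    rw [two_smul]; abel
  rw [h, smul_smul, inv_mul_cancel₀ (two_ne_zero : (2 : K) ≠ 0), one_smul]

end MainAux

/-- A linear map `T : h → g` is a relative Rota-Baxter operator of weight `λ`,
i.e. `[Tu, Tv]_g = T(φ(Tu)v - φ(Tv)u + λ[u,v]_h)`, if and only if `T` is a Maurer-Cartan
element of the differential graded Lie algebra `(⊕ₙ Hom(Λⁿ h, g), ⟦·,·⟧, d)`: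
`dT + (1/2)⟦T, T⟧ = 0`. -/
theorem relRB_weight_iff_maurerCartan
    {K : Type*} [Field K] [CharZero K]
    {gL : Type*} [LieRing gL] [LieAlgebra K gL]
    {hL : Type*} [LieRing hL] [LieAlgebra K hL]
    (φ : gL →ₗ⁅K⁆ LieDerivation K hL hL) (lam : K) (T : hL →ₗ[K] gL) :
    (∀ u v : hL, ⁅T u, T v⁆ = T (φ (T u) v - φ (T v) u + lam • ⁅u, v⁆)) ↔
      (∀ v : Fin 2 → hL,
        dW lam 1 (fun w : Fin 1 → hL => T (w 0)) v +
            ((2 : K)⁻¹) •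
              bracketW φ 1 1 (fun w : Fin 1 → hL => T (w 0)) (fun w : Fin 1 → hL => T (w 0))
                v = 0) := by
  constructor
  · intro h v
    rw [dW_eval, bracketW_eval, half_collapse, h (v 0) (v 1), map_add, map_sub]
    abel
  · intro h u w
    have hv := h ![u, w]
    rw [dW_eval, bracketW_eval, half_collapse] at hv
    simp only [Matrix.cons_val_zero, Matrix.cons_val_one, Matrix.head_cons] at hv
    rw [map_add, map_sub, ← sub_eq_zero, ← hv]
    abel
end RBPaper
end

section
/- Let φ: g → Der(h) be an action of a Lie algebra (g,[·,·]_g) on a Lie algebra (h,[·,·]_h), and let T: h → g be a relative Rota–Baxter operator of weight 1, i.e., [Tu, Tv]_g = T(φ(Tu)v − φ(Tv)u + [u,v]_h) for all u,v ∈ h. Then: (i) [u,v]_T := φ(Tu)v − φ(Tv)u + [u,v]_h defines a Lie algebra structure on h; (ii) the map θ: h → gl(g) defined by θ(u)x := T(φ(x)u) + [T(u), x]_g is a representation of the Lie algebra (h, [·,·]_T) on the vector space g. -/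
open BigOperators

namespace RBPaper

/-- Let `φ : g → Der(h)` be an action and `T : h → g` a relative Rota-Baxter
operator of weight `1`.  Then (i) `[u, v]_T = φ(Tu)v - φ(Tv)u + [u, v]_h` defines a Lie
algebra structure on `h`, and (ii) `θ(u)x = T(φ(x)u) + [Tu, x]_g` defines a representation
of `(h, [·,·]_T)` on the vector space `g`. -/
theorem weight_one_descended_bracket_and_representation
    {K : Type*} [Field K] [CharZero K]
    {gL : Type*} [LieRing gL] [LieAlgebra K gL]
    {hL : Type*} [LieRing hL] [LieAlgebra K hL]
    (φ : gL →ₗ⁅K⁆ LieDerivation K hL hL) (T : hL →ₗ[K] gL)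
    (hT : ∀ u v : hL, ⁅T u, T v⁆ = T (φ (T u) v - φ (T v) u + ⁅u, v⁆)) :
    (∀ u : hL, φ (T u) u - φ (T u) u + ⁅u, u⁆ = 0) ∧
    (∀ u v w : hL,
        (φ (T (φ (T u) v - φ (T v) u + ⁅u, v⁆)) w -
            φ (T w) (φ (T u) v - φ (T v) u + ⁅u, v⁆) +
            ⁅φ (T u) v - φ (T v) u + ⁅u, v⁆, w⁆) +
          (φ (T (φ (T v) w - φ (T w) v + ⁅v, w⁆)) u -
            φ (T u) (φ (T v) w - φ (T w) v + ⁅v, w⁆) +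
            ⁅φ (T v) w - φ (T w) v + ⁅v, w⁆, u⁆) +
          (φ (T (φ (T w) u - φ (T u) w + ⁅w, u⁆)) v -
            φ (T v) (φ (T w) u - φ (T u) w + ⁅w, u⁆) +
            ⁅φ (T w) u - φ (T u) w + ⁅w, u⁆, v⁆) = 0) ∧
    (∀ (u v : hL) (x : gL),
        T (φ x (φ (T u) v - φ (T v) u + ⁅u, v⁆)) +
            ⁅T (φ (T u) v - φ (T v) u + ⁅u, v⁆), x⁆ =
          (T (φ (T (φ x v) + ⁅T v, x⁆) u) + ⁅T u, T (φ x v) + ⁅T v, x⁆⁆) -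
            (T (φ (T (φ x u) + ⁅T u, x⁆) v) + ⁅T v, T (φ x u) + ⁅T u, x⁆⁆)) := by
  have hm : ∀ x y : gL, ∀ z : hL, φ ⁅x, y⁆ z = φ x (φ y z) - φ y (φ x z) := by
    intro x y z
    rw [φ.map_lie, LieDerivation.commutator_apply]
  have s1 : ∀ a b : hL, ⁅b, a⁆ = -⁅a, b⁆ := fun a b => by rw [← lie_skew]
  refine ⟨fun u => by simp, fun u v w => ?_, fun u v x => ?_⟩
  · rw [← hT u v, ← hT v w, ← hT w u]
    simp only [hm, map_add, map_sub, LieDerivation.apply_lie_eq_add, add_lie, sub_lie,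
      lie_lie, s1 u v, s1 u w, s1 v w,
      s1 u (φ (T w) v), s1 v (φ (T u) w), s1 w (φ (T v) u),
      s1 u (φ (T v) w), s1 v (φ (T w) u), s1 w (φ (T u) v),
      s1 ⁅u, v⁆ w,
      lie_neg, neg_lie, map_neg]
    abel
  · rw [← hT u v]
    simp only [lie_add]
    rw [hT u ((φ x) v), hT v ((φ x) u)]
    simp only [φ.map_add, map_add, map_sub, hm, LieDerivation.add_apply, LieDerivation.apply_lie_eq_add, lie_lie, s1 v ((φ x) u), map_neg]
    abel
end RBPaper
end
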